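/- arXiv:1907.04803 — 3 statements merged into one kernel-verified Lean document; each statement's English description precedes it below -/
import Mathlib

section
/- For |q|<1 and |x|<1, the series identity ∑_{j≥0} (xq;q)_j x^{j+1} q^{j+1} = ∑_{m≥1} (-1)^{m-1} q^{m(3m-1)/2} x^{3m-2} (1 + x q^m) holds, where (a;q)_j = ∏_{i=0}^{j-1}(1-a q^i). -/
open Finset

noncomputable def qPoch (a q : ℂ) (n : ℕ) : ℂ := ∏ i ∈ Finset.range n, (1 - a * q ^ i)

noncomputable def qInf (q : ℂ) : ℂ := ∏' i : ℕ, (1 - q ^ (i + 1))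

def zsgn (m : ℤ) : ℤ := if 0 ≤ m then 1 else -1

/-! Auxiliary development -/

noncomputable def Ffun (q y : ℂ) : ℂ := ∑' j : ℕ, qPoch (y * q) q j * y ^ (j + 1) * q ^ (j + 1)

lemma qPoch_zero (a q : ℂ) : qPoch a q 0 = 1 := by simp [qPoch]

lemma qPoch_succ_first (a q : ℂ) (n : ℕ) :
    qPoch a q (n + 1) = (1 - a) * qPoch (a * q) q n := by
  rw [qPoch, Finset.prod_range_succ']
  simp only [pow_zero, mul_one, qPoch]
  rw [mul_comm]
  congr 1
  apply Finset.prod_congr rfl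
  intro i _
  ring

lemma qPoch_succ_last (a q : ℂ) (n : ℕ) :
    qPoch a q (n + 1) = qPoch a q n * (1 - a * q ^ n) := by
  rw [qPoch, Finset.prod_range_succ, qPoch]

lemma norm_qPoch_le (a q : ℂ) (ha : ‖a‖ ≤ 1) (hq : ‖q‖ < 1) (n : ℕ) :
    ‖qPoch a q n‖ ≤ Real.exp ((1 - ‖q‖)⁻¹) := by
  have hq0 : (0:ℝ) ≤ ‖q‖ := norm_nonneg q
  rw [qPoch, norm_prod]
  calc ∏ i ∈ Finset.range n, ‖1 - a * q ^ i‖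
      ≤ ∏ i ∈ Finset.range n, Real.exp (‖q‖ ^ i) := by
        apply Finset.prod_le_prod
        · intro i _; exact norm_nonneg _
        · intro i _
          calc ‖1 - a * q ^ i‖ ≤ ‖(1:ℂ)‖ + ‖a * q ^ i‖ := norm_sub_le _ _
            _ ≤ 1 + ‖q‖ ^ i := by
                rw [norm_one, norm_mul, norm_pow]
                have : ‖a‖ * ‖q‖ ^ i ≤ 1 * ‖q‖ ^ i :=
                  mul_le_mul_of_nonneg_right ha (by positivity)
                nlinarith
            _ ≤ Real.exp (‖q‖ ^ i) := by
                rw [add_comm]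
                exact Real.add_one_le_exp _
    _ = Real.exp (∑ i ∈ Finset.range n, ‖q‖ ^ i) := (Real.exp_sum _ _).symm
    _ ≤ Real.exp ((1 - ‖q‖)⁻¹) := by
        apply Real.exp_le_exp.mpr
        calc ∑ i ∈ Finset.range n, ‖q‖ ^ i
            ≤ ∑' i : ℕ, ‖q‖ ^ i :=
              Summable.sum_le_tsum _ (fun i _ => by positivity)
                (summable_geometric_of_lt_one hq0 hq)
          _ = (1 - ‖q‖)⁻¹ := tsum_geometric_of_lt_one hq0 hq

lemma term_norm_le (q y : ℂ) (hq : ‖q‖ < 1) (hy : ‖y‖ ≤ 1) (j : ℕ) :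
    ‖qPoch (y * q) q j * y ^ (j + 1) * q ^ (j + 1)‖
      ≤ Real.exp ((1 - ‖q‖)⁻¹) * (‖y‖ * ‖q‖) ^ (j + 1) := by
  have hyq : ‖y * q‖ ≤ 1 := by
    rw [norm_mul]
    calc ‖y‖ * ‖q‖ ≤ 1 * 1 := by
          apply mul_le_mul hy hq.le (norm_nonneg q) zero_le_one
      _ = 1 := one_mul 1
  rw [norm_mul, norm_mul, norm_pow, norm_pow, mul_pow]
  have h1 := norm_qPoch_le (y * q) q hyq hq j
  have h2 : (0:ℝ) ≤ ‖y‖ ^ (j+1) * ‖q‖ ^ (j+1) := by positivity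
  calc ‖qPoch (y*q) q j‖ * ‖y‖ ^ (j+1) * ‖q‖ ^ (j+1)
      = ‖qPoch (y*q) q j‖ * (‖y‖ ^ (j+1) * ‖q‖ ^ (j+1)) := by ring
    _ ≤ Real.exp ((1 - ‖q‖)⁻¹) * (‖y‖ ^ (j+1) * ‖q‖ ^ (j+1)) :=
        mul_le_mul_of_nonneg_right h1 h2

lemma summable_F (q y : ℂ) (hq : ‖q‖ < 1) (hy : ‖y‖ < 1) :
    Summable (fun j : ℕ => qPoch (y * q) q j * y ^ (j + 1) * q ^ (j + 1)) := by
  have hr : ‖y‖ * ‖q‖ < 1 := by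
    calc ‖y‖ * ‖q‖ ≤ 1 * ‖q‖ :=
          mul_le_mul_of_nonneg_right hy.le (norm_nonneg q)
      _ = ‖q‖ := one_mul _
      _ < 1 := hq
  have hr0 : (0:ℝ) ≤ ‖y‖ * ‖q‖ := by positivity
  apply Summable.of_norm_bounded
    (g := fun j : ℕ => Real.exp ((1 - ‖q‖)⁻¹) * (‖y‖ * ‖q‖) ^ (j + 1))
  · apply Summable.mul_left
    exact (summable_geometric_of_lt_one hr0 hr).comp_injective (add_left_injective 1)
  · exact term_norm_le q y hq hy.le

lemma norm_F_le (q x y : ℂ) (hq : ‖q‖ < 1) (hx : ‖x‖ < 1) (hy : ‖y‖ ≤ ‖x‖) :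
    ‖Ffun q y‖ ≤ Real.exp ((1 - ‖q‖)⁻¹) * (1 - ‖x‖ * ‖q‖)⁻¹ := by
  have hr : ‖x‖ * ‖q‖ < 1 := by
    calc ‖x‖ * ‖q‖ ≤ 1 * ‖q‖ :=
          mul_le_mul_of_nonneg_right hx.le (norm_nonneg q)
      _ = ‖q‖ := one_mul _
      _ < 1 := hq
  have hr0 : (0:ℝ) ≤ ‖x‖ * ‖q‖ := by positivity
  have hy1 : ‖y‖ ≤ 1 := hy.trans hx.le
  apply tsum_of_norm_bounded
    ((hasSum_geometric_of_lt_one hr0 hr).mul_left (Real.exp ((1 - ‖q‖)⁻¹)))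
  intro j
  calc ‖qPoch (y * q) q j * y ^ (j + 1) * q ^ (j + 1)‖
      ≤ Real.exp ((1 - ‖q‖)⁻¹) * (‖y‖ * ‖q‖) ^ (j + 1) :=
        term_norm_le q y hq hy1 j
    _ ≤ Real.exp ((1 - ‖q‖)⁻¹) * (‖x‖ * ‖q‖) ^ j := by
        apply mul_le_mul_of_nonneg_left _ (Real.exp_nonneg _)
        calc (‖y‖ * ‖q‖) ^ (j+1) ≤ (‖x‖ * ‖q‖) ^ (j+1) := by
              apply pow_le_pow_left₀ (by positivity)
              exact mul_le_mul_of_nonneg_right hy (norm_nonneg q)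
          _ ≤ (‖x‖ * ‖q‖) ^ j := pow_le_pow_of_le_one hr0 hr.le (Nat.le_succ j)

lemma funEq (q y : ℂ) (hq : ‖q‖ < 1) (hy : ‖y‖ < 1) :
    Ffun q y = q * y * (1 + y * q) - y ^ 3 * q ^ 3 * Ffun q (y * q) := by
  set c : ℕ → ℂ := fun j => qPoch (y * q) q j * y ^ (j + 1) * q ^ (j + 1) with hc
  set d : ℕ → ℂ := fun j =>
    y ^ 3 * q ^ 3 * (qPoch (y * q * q) q j * (y * q) ^ (j + 1) * q ^ (j + 1)) with hd
  set e : ℕ → ℂ := fun j =>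
    y ^ (j + 2) * q ^ (j + 2) * qPoch (y * q * q) q j * (1 - y ^ 2 * q ^ (j + 3)) with he
  have hyq : ‖y * q‖ < 1 := by
    rw [norm_mul]
    calc ‖y‖ * ‖q‖ ≤ 1 * ‖q‖ :=
          mul_le_mul_of_nonneg_right hy.le (norm_nonneg q)
      _ = ‖q‖ := one_mul _
      _ < 1 := hq
  have Sc : Summable c := summable_F q y hq hy
  have Sd : Summable d := (summable_F q (y * q) hq hyq).mul_left _
  have hr : ‖y‖ * ‖q‖ < 1 := by rw [norm_mul] at hyq; exact hyq
  have hr0 : (0:ℝ) ≤ ‖y‖ * ‖q‖ := by positivity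
  have Se : Summable e := by
    apply Summable.of_norm_bounded
      (g := fun j : ℕ => (2 * Real.exp ((1 - ‖q‖)⁻¹)) * (‖y‖ * ‖q‖) ^ j)
    · exact (summable_geometric_of_lt_one hr0 hr).mul_left _
    · intro j
      have hb : ‖qPoch (y * q * q) q j‖ ≤ Real.exp ((1 - ‖q‖)⁻¹) := by
        apply norm_qPoch_le _ _ _ hq
        rw [norm_mul]
        calc ‖y * q‖ * ‖q‖ ≤ 1 * 1 :=
              mul_le_mul hyq.le hq.le (norm_nonneg q) zero_le_one
          _ = 1 := one_mul 1
      have h2 : ‖(1 : ℂ) - y ^ 2 * q ^ (j + 3)‖ ≤ 2 := by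
        calc ‖(1:ℂ) - y ^ 2 * q ^ (j+3)‖ ≤ ‖(1:ℂ)‖ + ‖y ^ 2 * q ^ (j+3)‖ := norm_sub_le _ _
          _ ≤ 1 + 1 := by
              rw [norm_one]
              apply add_le_add le_rfl
              rw [norm_mul, norm_pow, norm_pow]
              calc ‖y‖ ^ 2 * ‖q‖ ^ (j+3) ≤ 1 * 1 := by
                    apply mul_le_mul (pow_le_one₀ (norm_nonneg y) hy.le)
                      (pow_le_one₀ (norm_nonneg q) hq.le) (by positivity) zero_le_one
                _ = 1 := one_mul 1
          _ = 2 := by norm_num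
      have hyj : ‖y ^ (j + 2) * q ^ (j + 2)‖ ≤ (‖y‖ * ‖q‖) ^ j := by
        rw [norm_mul, norm_pow, norm_pow, ← mul_pow]
        exact pow_le_pow_of_le_one hr0 hr.le (by omega)
      calc ‖e j‖ = ‖y ^ (j+2) * q ^ (j+2)‖ * ‖qPoch (y*q*q) q j‖
            * ‖(1:ℂ) - y ^ 2 * q ^ (j+3)‖ := by
            simp [he, norm_mul]
        _ ≤ (‖y‖ * ‖q‖) ^ j * Real.exp ((1 - ‖q‖)⁻¹) * 2 := by
            apply mul_le_mul _ h2 (norm_nonneg _) (by positivity)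
            exact mul_le_mul hyj hb (norm_nonneg _) (by positivity)
        _ = (2 * Real.exp ((1 - ‖q‖)⁻¹)) * (‖y‖ * ‖q‖) ^ j := by ring
  have key : ∀ j : ℕ, c (j + 1) + d (j + 1) = e j - e (j + 1) := by
    intro j
    simp only [hc, hd, he]
    rw [qPoch_succ_first (y * q) q j, qPoch_succ_last (y * q * q) q j]
    ring
  have hsum : Ffun q y + y ^ 3 * q ^ 3 * Ffun q (y * q) = ∑' j, (c j + d j) := by
    rw [Ffun, Ffun, ← tsum_mul_left, Sc.tsum_add Sd]
  have h2 : ∑' j, (c j + d j) = (c 0 + d 0) + ∑' j, (c (j + 1) + d (j + 1)) :=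
    (Sc.add Sd).tsum_eq_zero_add
  have Se' : Summable (fun j => e (j + 1)) := by
    exact (summable_nat_add_iff 1).mpr Se
  have h3 : ∑' j, (c (j + 1) + d (j + 1)) = e 0 := by
    rw [tsum_congr key, Se.tsum_sub Se', Se.tsum_eq_zero_add]
    ring
  have h4 : Ffun q y + y ^ 3 * q ^ 3 * Ffun q (y * q) = (c 0 + d 0) + e 0 := by
    rw [hsum, h2, h3]
  have h5 : (c 0 + d 0) + e 0 = q * y * (1 + y * q) := by
    simp only [hc, hd, he, qPoch_zero]
    ring
  rw [h5] at h4
  linear_combination h4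

def fExp : ℕ → ℕ
  | 0 => 0
  | (M + 1) => fExp M + 3 * (M + 1)

lemma two_fExp (m : ℕ) : 2 * fExp m = 3 * m * (m + 1) := by
  induction m with
  | zero => simp [fExp]
  | succ M ih =>
      show 2 * (fExp M + 3 * (M + 1)) = 3 * (M + 1) * (M + 1 + 1)
      have h : 2 * (fExp M + 3 * (M + 1)) = 2 * fExp M + 6 * (M + 1) := by ring
      rw [h, ih]; ring

lemma exp_div_eq (m : ℕ) : ((m + 1) * (3 * m + 2)) / 2 = fExp m + m + 1 := by
  have h : (m + 1) * (3 * m + 2) = 2 * (fExp m + m + 1) := by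
    have h2 := two_fExp m
    calc (m + 1) * (3 * m + 2) = 3 * m * (m + 1) + 2 * (m + 1) := by ring
      _ = 2 * fExp m + 2 * (m + 1) := by rw [h2]
      _ = 2 * (fExp m + m + 1) := by ring
  rw [h, Nat.mul_div_cancel_left _ (by norm_num : 0 < 2)]

lemma fExp_ge (M : ℕ) : 3 * M ≤ fExp M := by
  induction M with
  | zero => simp [fExp]
  | succ M ih => show 3 * (M + 1) ≤ fExp M + 3 * (M + 1); omega

lemma iterEq (q x : ℂ) (hq : ‖q‖ < 1) (hx : ‖x‖ < 1) (M : ℕ) :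
    Ffun q x = (∑ m ∈ Finset.range M,
        (-1 : ℂ) ^ m * q ^ (fExp m + m + 1) * x ^ (3 * m + 1) * (1 + x * q ^ (m + 1)))
      + (-1 : ℂ) ^ M * x ^ (3 * M) * q ^ (fExp M) * Ffun q (x * q ^ M) := by
  induction M with
  | zero => simp [fExp]
  | succ M ih =>
      have hy : ‖x * q ^ M‖ < 1 := by
        rw [norm_mul, norm_pow]
        calc ‖x‖ * ‖q‖ ^ M ≤ ‖x‖ * 1 :=
              mul_le_mul_of_nonneg_left (pow_le_one₀ (norm_nonneg q) hq.le) (norm_nonneg x)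
          _ = ‖x‖ := mul_one _
          _ < 1 := hx
      have hfe := funEq q (x * q ^ M) hq hy
      have hxq : x * q ^ M * q = x * q ^ (M + 1) := by ring
      rw [hxq] at hfe
      rw [ih, Finset.sum_range_succ, hfe]
      have h1 : fExp (M + 1) = fExp M + 3 * (M + 1) := rfl
      simp only [h1, pow_add, pow_succ, pow_mul]
      ring

theorem stmt0 (q x : ℂ) (hq : ‖q‖ < 1) (hx : ‖x‖ < 1) :
    ∑' j : ℕ, qPoch (x * q) q j * x ^ (j + 1) * q ^ (j + 1)
      = ∑' m : ℕ, (-1 : ℂ) ^ m * q ^ (((m + 1) * (3 * m + 2)) / 2) * x ^ (3 * m + 1)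
          * (1 + x * q ^ (m + 1)) := by
  set T : ℕ → ℂ := fun m =>
    (-1 : ℂ) ^ m * q ^ (((m + 1) * (3 * m + 2)) / 2) * x ^ (3 * m + 1)
      * (1 + x * q ^ (m + 1)) with hT
  have hTm : ∀ m, T m
      = (-1 : ℂ) ^ m * q ^ (fExp m + m + 1) * x ^ (3 * m + 1) * (1 + x * q ^ (m + 1)) := by
    intro m; rw [hT]; simp only [exp_div_eq]
  -- summability of T
  have hST : Summable T := by
    apply Summable.of_norm_bounded (g := fun m : ℕ => 2 * ‖x‖ ^ m)
    · exact (summable_geometric_of_lt_one (norm_nonneg x) hx).mul_left 2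
    · intro m
      rw [hT]
      have h1 : ‖(-1 : ℂ) ^ m‖ = 1 := by
        rw [norm_pow, norm_neg, norm_one, one_pow]
      have h2 : ‖q ^ (((m + 1) * (3 * m + 2)) / 2)‖ ≤ 1 := by
        rw [norm_pow]; exact pow_le_one₀ (norm_nonneg q) hq.le
      have h3 : ‖x ^ (3 * m + 1)‖ ≤ ‖x‖ ^ m := by
        rw [norm_pow]
        exact pow_le_pow_of_le_one (norm_nonneg x) hx.le (by omega)
      have h4 : ‖1 + x * q ^ (m + 1)‖ ≤ 2 := by
        calc ‖1 + x * q ^ (m+1)‖ ≤ ‖(1:ℂ)‖ + ‖x * q ^ (m+1)‖ := norm_add_le _ _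
          _ ≤ 1 + 1 := by
              rw [norm_one]
              apply add_le_add le_rfl
              rw [norm_mul, norm_pow]
              calc ‖x‖ * ‖q‖ ^ (m+1) ≤ 1 * 1 :=
                    mul_le_mul hx.le (pow_le_one₀ (norm_nonneg q) hq.le)
                      (by positivity) zero_le_one
                _ = 1 := one_mul 1
          _ = 2 := by norm_num
      calc ‖(-1:ℂ)^m * q ^ (((m+1)*(3*m+2))/2) * x ^ (3*m+1) * (1 + x * q ^ (m+1))‖
          = ‖(-1:ℂ)^m‖ * ‖q ^ (((m+1)*(3*m+2))/2)‖ * ‖x ^ (3*m+1)‖ * ‖1 + x * q ^ (m+1)‖ := by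
            simp [norm_mul]
        _ ≤ 1 * 1 * ‖x‖ ^ m * 2 := by
            apply mul_le_mul _ h4 (norm_nonneg _) (by positivity)
            apply mul_le_mul _ h3 (norm_nonneg _) (by norm_num)
            rw [h1]
            exact mul_le_mul_of_nonneg_left h2 (by norm_num)
        _ = 2 * ‖x‖ ^ m := by ring
  -- remainder tends to zero
  set R : ℕ → ℂ := fun M => (-1 : ℂ) ^ M * x ^ (3 * M) * q ^ (fExp M) * Ffun q (x * q ^ M)
    with hR
  have hB : ∀ M : ℕ, ‖R M‖
      ≤ ((‖x‖ * ‖q‖) ^ 3) ^ M * (Real.exp ((1 - ‖q‖)⁻¹) * (1 - ‖x‖ * ‖q‖)⁻¹) := by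
    intro M
    have hy : ‖x * q ^ M‖ ≤ ‖x‖ := by
      rw [norm_mul, norm_pow]
      calc ‖x‖ * ‖q‖ ^ M ≤ ‖x‖ * 1 :=
            mul_le_mul_of_nonneg_left (pow_le_one₀ (norm_nonneg q) hq.le) (norm_nonneg x)
        _ = ‖x‖ := mul_one _
    have hF := norm_F_le q x (x * q ^ M) hq hx hy
    have h1 : ‖(-1:ℂ) ^ M * x ^ (3*M) * q ^ (fExp M)‖ ≤ ((‖x‖ * ‖q‖) ^ 3) ^ M := by
      have hqM : ‖q‖ ^ (fExp M) ≤ ‖q‖ ^ (3 * M) :=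
        pow_le_pow_of_le_one (norm_nonneg q) hq.le (fExp_ge M)
      calc ‖(-1:ℂ) ^ M * x ^ (3*M) * q ^ (fExp M)‖
          = ‖x‖ ^ (3*M) * ‖q‖ ^ (fExp M) := by
            simp [norm_mul, norm_pow]
        _ ≤ ‖x‖ ^ (3*M) * ‖q‖ ^ (3*M) :=
            mul_le_mul_of_nonneg_left hqM (by positivity)
        _ = ((‖x‖ * ‖q‖) ^ 3) ^ M := by ring
    calc ‖R M‖ = ‖(-1:ℂ) ^ M * x ^ (3*M) * q ^ (fExp M)‖ * ‖Ffun q (x * q ^ M)‖ := by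
          rw [hR]; simp [norm_mul]
      _ ≤ ((‖x‖ * ‖q‖) ^ 3) ^ M * (Real.exp ((1 - ‖q‖)⁻¹) * (1 - ‖x‖ * ‖q‖)⁻¹) :=
          mul_le_mul h1 hF (norm_nonneg _) (by positivity)
  have hr : ‖x‖ * ‖q‖ < 1 := by
    calc ‖x‖ * ‖q‖ ≤ 1 * ‖q‖ := mul_le_mul_of_nonneg_right hx.le (norm_nonneg q)
      _ = ‖q‖ := one_mul _
      _ < 1 := hq
  have hr3 : (‖x‖ * ‖q‖) ^ 3 < 1 := pow_lt_one₀ (by positivity) hr (by norm_num)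
  have hR0 : Filter.Tendsto R Filter.atTop (nhds 0) := by
    rw [tendsto_zero_iff_norm_tendsto_zero]
    apply squeeze_zero (fun M => norm_nonneg _) hB
    have := (tendsto_pow_atTop_nhds_zero_of_lt_one (by positivity) hr3).mul_const
      (Real.exp ((1 - ‖q‖)⁻¹) * (1 - ‖x‖ * ‖q‖)⁻¹)
    simpa using this
  have hps : ∀ M : ℕ, ∑ m ∈ Finset.range M, T m = Ffun q x - R M := by
    intro M
    have h := iterEq q x hq hx M
    have h' : ∑ m ∈ Finset.range M, T m
        = ∑ m ∈ Finset.range M,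
          (-1 : ℂ) ^ m * q ^ (fExp m + m + 1) * x ^ (3 * m + 1) * (1 + x * q ^ (m + 1)) :=
      Finset.sum_congr rfl (fun m _ => hTm m)
    rw [h', eq_sub_iff_add_eq]
    exact h.symm
  have hten : Filter.Tendsto (fun M => ∑ m ∈ Finset.range M, T m)
      Filter.atTop (nhds (Ffun q x)) := by
    simp only [hps]
    have := Filter.Tendsto.sub (tendsto_const_nhds (x := Ffun q x)
      (f := Filter.atTop (α := ℕ))) hR0
    simpa using this
  have hHS : HasSum T (Ffun q x) := (hST.hasSum_iff_tendsto_nat).mpr hten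
  have : Ffun q x = ∑' m, T m := hHS.tsum_eq.symm
  exact this
end

section
/- For |q|<1 and each integer n ≥ 0, one has (q;q)_∞ · ∑_{r≥n} (q;q)_r q^r / ((q;q)_{r-n} (q;q)_{r+n+1}) = q^n ∑_{j≥0} (q^{n+1};q)_j q^{(n+1)j}. -/
set_option maxHeartbeats 1000000

open Finset

namespace QAux
variable {q : ℂ}


lemma norm_pow_lt (hq : ‖q‖ < 1) (i : ℕ) : ‖q ^ (i+1)‖ < 1 := by
  rw [norm_pow]
  exact pow_lt_one₀ (norm_nonneg q) hq (Nat.succ_ne_zero i)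

lemma one_sub_ne (hq : ‖q‖ < 1) (i : ℕ) : (1 : ℂ) - q ^ (i+1) ≠ 0 := by
  intro h
  have h1 : q ^ (i+1) = 1 := by linear_combination -h
  have := norm_pow_lt hq i
  rw [h1] at this
  simp at this

lemma qPoch_q_eq (m : ℕ) : qPoch q q m = ∏ i ∈ range m, (1 - q ^ (i+1)) := by
  unfold qPoch
  refine Finset.prod_congr rfl fun i _ => ?_
  rw [pow_succ']

lemma qPoch_q_ne (hq : ‖q‖ < 1) (m : ℕ) : qPoch q q m ≠ 0 := by
  rw [qPoch_q_eq]
  exact Finset.prod_ne_zero_iff.2 fun i _ => one_sub_ne hq i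

-- Weierstrass inequality
lemma weier (f : ℕ → ℝ) (h0 : ∀ i, 0 ≤ f i) (h1 : ∀ i, f i ≤ 1) (s : Finset ℕ) :
    1 - ∑ i ∈ s, f i ≤ ∏ i ∈ s, (1 - f i) := by
  induction s using Finset.cons_induction with
  | empty => simp
  | cons a s ha ih =>
    rw [Finset.prod_cons, Finset.sum_cons]
    have hp : (0:ℝ) ≤ ∏ i ∈ s, (1 - f i) :=
      Finset.prod_nonneg fun i _ => by linarith [h1 i]
    have h2 : (0:ℝ) ≤ ∑ i ∈ s, f i := Finset.sum_nonneg fun i _ => h0 i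
    have h3 : (1 - f a) * (1 - ∑ i ∈ s, f i) ≤ (1 - f a) * ∏ i ∈ s, (1 - f i) :=
      mul_le_mul_of_nonneg_left ih (by linarith [h1 a])
    nlinarith [mul_nonneg (h0 a) h2]

-- uniform positive lower bound for partial products of (1 - r^(i+1))
lemma exists_lb (hq : ‖q‖ < 1) :
    ∃ c : ℝ, 0 < c ∧ ∀ k, c ≤ ∏ i ∈ range k, (1 - ‖q‖ ^ (i+1)) := by
  set r := ‖q‖ with hr
  have hr0 : 0 ≤ r := norm_nonneg q
  have hpow : ∀ i : ℕ, r ^ (i+1) < 1 := fun i => pow_lt_one₀ hr0 hq (Nat.succ_ne_zero i)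
  have hpos : ∀ i : ℕ, 0 < 1 - r ^ (i+1) := fun i => by linarith [hpow i]
  -- choose N with r^(N+1) * (1-r)⁻¹ ≤ 1/2
  have htend : Filter.Tendsto (fun n : ℕ => r ^ n) Filter.atTop (nhds 0) :=
    tendsto_pow_atTop_nhds_zero_of_lt_one hr0 hq
  obtain ⟨N, hN⟩ := (Filter.tendsto_atTop'.mp (htend.const_mul (1-r)⁻¹)) (Set.Iio (1/2))
    (by simp; exact Iio_mem_nhds (by norm_num))
  have hNle : (1-r)⁻¹ * r ^ (N+1) < 1/2 := hN (N+1) (by omega)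
  refine ⟨(∏ i ∈ range N, (1 - r ^ (i+1))) * (1/2),
    mul_pos (Finset.prod_pos fun i _ => hpos i) (by norm_num), fun k => ?_⟩
  by_cases hk : k ≤ N
  · have : ∏ i ∈ range N, (1 - r^(i+1))
        = (∏ i ∈ range k, (1 - r^(i+1))) * ∏ i ∈ Finset.Ico k N, (1 - r^(i+1)) :=
      (Finset.prod_range_mul_prod_Ico _ hk).symm
    have h2 : ∏ i ∈ Finset.Ico k N, (1 - r^(i+1)) ≤ 1 :=
      Finset.prod_le_one (fun i _ => le_of_lt (hpos i)) (fun i _ => by nlinarith [pow_nonneg hr0 (i+1)])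
    have hk0 : 0 < ∏ i ∈ range k, (1 - r^(i+1)) := Finset.prod_pos fun i _ => hpos i
    calc (∏ i ∈ range N, (1 - r ^ (i+1))) * (1/2)
        ≤ ∏ i ∈ range N, (1 - r ^ (i+1)) := by
          nlinarith [Finset.prod_pos (fun i (_ : i ∈ range N) => hpos i)]
      _ ≤ ∏ i ∈ range k, (1 - r ^ (i+1)) := by
          rw [this]; nlinarith [hk0, h2]
  · push_neg at hk
    have hsplit : ∏ i ∈ range k, (1 - r^(i+1))
        = (∏ i ∈ range N, (1 - r^(i+1))) * ∏ i ∈ Finset.Ico N k, (1 - r^(i+1)) :=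
      (Finset.prod_range_mul_prod_Ico _ (le_of_lt hk)).symm
    have hsum : ∑ i ∈ Finset.Ico N k, r^(i+1) ≤ 1/2 := by
      have : ∑ i ∈ Finset.Ico N k, r^(i+1) = ∑ j ∈ range (k-N), r^(N+j+1) := by
        rw [Finset.sum_Ico_eq_sum_range]
      rw [this]
      have h1 : ∑ j ∈ range (k-N), r^(N+j+1) = r^(N+1) * ∑ j ∈ range (k-N), r^j := by
        rw [Finset.mul_sum]; exact Finset.sum_congr rfl fun j _ => by ring
      rw [h1]
      have h2 : ∑ j ∈ range (k-N), r^j ≤ (1-r)⁻¹ := by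
        have := Summable.sum_le_tsum (range (k-N)) (fun j _ => pow_nonneg hr0 j)
          (summable_geometric_of_lt_one hr0 hq)
        rwa [tsum_geometric_of_lt_one hr0 hq] at this
      calc r^(N+1) * ∑ j ∈ range (k-N), r^j ≤ r^(N+1) * (1-r)⁻¹ :=
            mul_le_mul_of_nonneg_left h2 (pow_nonneg hr0 _)
        _ ≤ 1/2 := by linarith [hNle]
    have hw : (1:ℝ)/2 ≤ ∏ i ∈ Finset.Ico N k, (1 - r^(i+1)) := by
      have := weier (fun i => r^(i+1)) (fun i => pow_nonneg hr0 _)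
        (fun i => le_of_lt (hpow i)) (Finset.Ico N k)
      linarith [hsum, this]
    rw [hsplit]
    exact mul_le_mul_of_nonneg_left hw
      (le_of_lt (Finset.prod_pos fun i _ => hpos i))



-- norm lower bound on qPoch
lemma norm_qPoch_ge (hq : ‖q‖ < 1) :
    ∃ c : ℝ, 0 < c ∧ ∀ k, c ≤ ‖qPoch q q k‖ := by
  obtain ⟨c, hc, hlb⟩ := exists_lb hq
  refine ⟨c, hc, fun k => le_trans (hlb k) ?_⟩
  rw [qPoch_q_eq, norm_prod]
  refine Finset.prod_le_prod (fun i _ => ?_) (fun i _ => ?_)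
  · have : ‖q‖^(i+1) < 1 := pow_lt_one₀ (norm_nonneg q) hq (Nat.succ_ne_zero i)
    linarith
  · calc 1 - ‖q‖^(i+1) = ‖(1:ℂ)‖ - ‖q^(i+1)‖ := by simp
      _ ≤ ‖1 - q^(i+1)‖ := norm_sub_norm_le _ _

noncomputable def E (q x : ℂ) : ℂ := ∑' k : ℕ, x ^ k / qPoch q q k

lemma summable_E (hq : ‖q‖ < 1) {x : ℂ} (hx : ‖x‖ < 1) :
    Summable (fun k : ℕ => x ^ k / qPoch q q k) := by
  obtain ⟨c, hc, hlb⟩ := norm_qPoch_ge hq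
  refine Summable.of_norm_bounded (g := fun k => c⁻¹ * ‖x‖^k)
    ((summable_geometric_of_lt_one (norm_nonneg x) hx).mul_left _) (fun k => ?_)
  rw [norm_div, norm_pow, div_eq_mul_inv, mul_comm]
  have h1 : ‖qPoch q q k‖⁻¹ ≤ c⁻¹ :=
    inv_anti₀ hc (hlb k)
  exact mul_le_mul_of_nonneg_right h1 (pow_nonneg (norm_nonneg x) k)

lemma funcE (hq : ‖q‖ < 1) {x : ℂ} (hx : ‖x‖ < 1) :
    (1 - x) * E q x = E q (q * x) := by
  have hqx : ‖q * x‖ < 1 := by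
    rw [norm_mul]
    exact lt_of_le_of_lt (mul_le_of_le_one_left (norm_nonneg x) hq.le) hx
  have hs := summable_E hq hx
  have hs2 := summable_E hq hqx
  have hshift : Summable (fun k : ℕ => x ^ (k+1) / qPoch q q (k+1)) :=
    (summable_nat_add_iff 1).2 hs
  have hmul : Summable (fun k : ℕ => x ^ (k+1) / qPoch q q k) := by
    have h := hs.mul_left x
    refine h.congr fun k => ?_
    rw [pow_succ']
    ring
  have hq0 : qPoch q q 0 = 1 := by unfold qPoch; simp
  have e1 : x * E q x = ∑' k:ℕ, x^(k+1)/qPoch q q k := by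
    rw [E, ← tsum_mul_left]
    exact tsum_congr fun k => by rw [pow_succ']; ring
  have e2 : E q x = 1 + ∑' k:ℕ, x^(k+1)/qPoch q q (k+1) := by
    rw [E, Summable.tsum_eq_zero_add hs, hq0]
    norm_num
  have e3 : E q (q*x) = 1 + ∑' k:ℕ, (q*x)^(k+1)/qPoch q q (k+1) := by
    rw [E, Summable.tsum_eq_zero_add hs2, hq0]
    norm_num
  have key : ∀ k : ℕ, x^(k+1) / qPoch q q (k+1) - x^(k+1) / qPoch q q k
      = (q*x)^(k+1) / qPoch q q (k+1) := by
    intro k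
    have hP : qPoch q q (k+1) = qPoch q q k * (1 - q^(k+1)) := by
      rw [qPoch_q_eq, qPoch_q_eq, Finset.prod_range_succ]
    have h1 := qPoch_q_ne hq k
    have h2 := qPoch_q_ne hq (k+1)
    have h3 : (1:ℂ) - q^(k+1) ≠ 0 := by
      intro h0
      rw [hP, h0, mul_zero] at h2
      exact h2 rfl
    rw [hP]
    field_simp
    ring
  have e4 : (∑' k:ℕ, x^(k+1)/qPoch q q (k+1)) - ∑' k:ℕ, x^(k+1)/qPoch q q k
      = ∑' k:ℕ, (q*x)^(k+1)/qPoch q q (k+1) := by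
    rw [← Summable.tsum_sub hshift hmul]
    exact tsum_congr key
  linear_combination e2 - e1 + e4 - e3

lemma iterE (hq : ‖q‖ < 1) (m : ℕ) : E q (q^(m+1)) = qPoch q q m * E q q := by
  induction m with
  | zero => simp [qPoch]
  | succ m ih =>
    have hx : ‖q^(m+1)‖ < 1 := by
      rw [norm_pow]
      exact pow_lt_one₀ (norm_nonneg q) hq (Nat.succ_ne_zero m)
    have h := funcE hq hx
    have hP : qPoch q q (m+1) = qPoch q q m * (1 - q^(m+1)) := by
      rw [qPoch_q_eq, qPoch_q_eq, Finset.prod_range_succ]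
    have hpow : q * q^(m+1) = q^(m+1+1) := by ring
    rw [hpow] at h
    rw [← h, ih, hP]
    ring

lemma tendsto_P (hq : ‖q‖ < 1) :
    Filter.Tendsto (fun N : ℕ => qPoch q q N) Filter.atTop (nhds (qInf q)) := by
  have hmult : Multipliable (fun i : ℕ => 1 - q^(i+1)) := by
    apply Complex.multipliable_of_summable_log
    have hsum : Summable (fun i : ℕ => 3/2 * ‖q‖^(i+1)) := by
      have h := (summable_geometric_of_lt_one (norm_nonneg q) hq).mul_left (3/2*‖q‖)
      exact h.congr fun i => by rw [pow_succ]; ring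
    apply Summable.of_norm_bounded_eventually_nat (g := fun i => 3/2 * ‖q‖^(i+1)) hsum
    have hev : ∀ᶠ i : ℕ in Filter.atTop, ‖q‖^(i+1) ≤ 1/2 := by
      have ht : Filter.Tendsto (fun i : ℕ => ‖q‖^(i+1)) Filter.atTop (nhds 0) := by
        have := tendsto_pow_atTop_nhds_zero_of_lt_one (norm_nonneg q) hq
        exact this.comp (Filter.tendsto_add_atTop_nat 1)
      exact ht.eventually_le_const (by norm_num)
    filter_upwards [hev] with i hi
    have : (1:ℂ) - q^(i+1) = 1 + (-(q^(i+1))) := by ring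
    rw [this]
    have hb := Complex.norm_log_one_add_half_le_self (z := -(q^(i+1)))
      (by rwa [norm_neg, norm_pow])
    rwa [norm_neg, norm_pow] at hb
  have := hmult.hasProd.tendsto_prod_nat
  refine this.congr fun N => ?_
  rw [qPoch_q_eq]

lemma tendsto_Etail (hq : ‖q‖ < 1) :
    Filter.Tendsto (fun N : ℕ => E q (q^(N+1))) Filter.atTop (nhds 1) := by
  obtain ⟨c, hc, hlb⟩ := norm_qPoch_ge hq
  have hbound : ∀ N : ℕ, ‖E q (q^(N+1)) - 1‖ ≤ (c⁻¹ * (1-‖q‖)⁻¹) * ‖q‖^(N+1) := by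
    intro N
    have hx : ‖q^(N+1)‖ < 1 := by
      rw [norm_pow]; exact pow_lt_one₀ (norm_nonneg q) hq (Nat.succ_ne_zero N)
    have hs := summable_E hq hx
    have hshift : Summable (fun k : ℕ => (q^(N+1)) ^ (k+1) / qPoch q q (k+1)) :=
      (summable_nat_add_iff 1).2 hs
    have e2 : E q (q^(N+1)) - 1 = ∑' k:ℕ, (q^(N+1))^(k+1)/qPoch q q (k+1) := by
      have hq0 : qPoch q q 0 = 1 := by unfold qPoch; simp
      rw [E, Summable.tsum_eq_zero_add hs, hq0]
      ring
    rw [e2]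
    have hterm : ∀ k : ℕ, ‖(q^(N+1))^(k+1)/qPoch q q (k+1)‖
        ≤ (c⁻¹ * ‖q‖^(N+1)) * ‖q‖^k := by
      intro k
      rw [norm_div, div_eq_mul_inv]
      have h1 : ‖(q^(N+1))^(k+1)‖ ≤ ‖q‖^(N+1) * ‖q‖^k := by
        rw [norm_pow, norm_pow, ← pow_mul, ← pow_add]
        apply pow_le_pow_of_le_one (norm_nonneg q) hq.le
        nlinarith [Nat.zero_le (N*k)]
      have h2 : ‖qPoch q q (k+1)‖⁻¹ ≤ c⁻¹ := inv_anti₀ hc (hlb (k+1))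
      calc ‖(q^(N+1))^(k+1)‖ * ‖qPoch q q (k+1)‖⁻¹
          ≤ (‖q‖^(N+1) * ‖q‖^k) * c⁻¹ := by
            apply mul_le_mul h1 h2 (by positivity) (by positivity)
        _ = (c⁻¹ * ‖q‖^(N+1)) * ‖q‖^k := by ring
    calc ‖∑' k:ℕ, (q^(N+1))^(k+1)/qPoch q q (k+1)‖
        ≤ ∑' k:ℕ, ‖(q^(N+1))^(k+1)/qPoch q q (k+1)‖ :=
          norm_tsum_le_tsum_norm (hshift.norm)
      _ ≤ ∑' k:ℕ, (c⁻¹ * ‖q‖^(N+1)) * ‖q‖^k := by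
          apply Summable.tsum_le_tsum hterm hshift.norm
            ((summable_geometric_of_lt_one (norm_nonneg q) hq).mul_left _)
      _ = (c⁻¹ * ‖q‖^(N+1)) * (1-‖q‖)⁻¹ := by
          rw [tsum_mul_left, tsum_geometric_of_lt_one (norm_nonneg q) hq]
      _ = (c⁻¹ * (1-‖q‖)⁻¹) * ‖q‖^(N+1) := by ring
  have hz : Filter.Tendsto (fun N : ℕ => E q (q^(N+1)) - 1) Filter.atTop (nhds 0) := by
    apply squeeze_zero_norm hbound
    have := tendsto_pow_atTop_nhds_zero_of_lt_one (norm_nonneg q) hq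
    have h2 := (this.comp (Filter.tendsto_add_atTop_nat 1)).const_mul (c⁻¹ * (1-‖q‖)⁻¹)
    simpa using h2
  have := hz.add_const 1
  simpa using this

lemma qInf_mul_E (hq : ‖q‖ < 1) : qInf q * E q q = 1 := by
  have h1 : Filter.Tendsto (fun N : ℕ => qPoch q q N * E q q) Filter.atTop
      (nhds (qInf q * E q q)) := (tendsto_P hq).mul_const _
  have h2 : (fun N : ℕ => qPoch q q N * E q q) = fun N : ℕ => E q (q^(N+1)) := by
    funext N
    rw [iterE hq N]
  rw [h2] at h1
  exact tendsto_nhds_unique h1 (tendsto_Etail hq)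
lemma qPoch_succ (a : ℂ) (n : ℕ) : qPoch a q (n+1) = qPoch a q n * (1 - a * q^n) :=
  Finset.prod_range_succ _ n

lemma qPoch_succ_left (a : ℂ) (n : ℕ) :
    qPoch a q (n+1) = (1 - a) * qPoch (a*q) q n := by
  unfold qPoch
  rw [Finset.prod_range_succ']
  simp only [pow_zero, mul_one]
  rw [mul_comm]
  congr 1
  refine Finset.prod_congr rfl fun i _ => ?_
  rw [pow_succ']
  ring_nf

noncomputable def qb (q : ℂ) (n m : ℕ) : ℂ := qPoch (q^(m+1)) q n / qPoch q q n

lemma qb_zero (hq : ‖q‖ < 1) (n : ℕ) : qb q n 0 = 1 := by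
  unfold qb
  rw [pow_one]
  exact div_self (qPoch_q_ne hq n)

lemma norm_qb_le (hq : ‖q‖ < 1) (n m : ℕ) :
    ‖qb q n m‖ ≤ 2^n * ‖qPoch q q n‖⁻¹ := by
  unfold qb
  rw [norm_div, div_eq_mul_inv]
  apply mul_le_mul_of_nonneg_right ?_ (by positivity)
  unfold qPoch
  rw [norm_prod]
  calc ∏ i ∈ range n, ‖1 - q^(m+1) * q^i‖ ≤ ∏ i ∈ range n, 2 := by
        apply Finset.prod_le_prod (fun i _ => norm_nonneg _) (fun i _ => ?_)
        calc ‖1 - q^(m+1)*q^i‖ ≤ ‖(1:ℂ)‖ + ‖q^(m+1)*q^i‖ := norm_sub_le _ _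
          _ ≤ 2 := by
              rw [norm_one, norm_mul, norm_pow, norm_pow]
              nlinarith [pow_le_one₀ (norm_nonneg q) hq.le (n := m+1),
                pow_le_one₀ (norm_nonneg q) hq.le (n := i),
                pow_nonneg (norm_nonneg q) (m+1), pow_nonneg (norm_nonneg q) i]
    _ = 2^n := by rw [Finset.prod_const, Finset.card_range]

lemma summable_qb (hq : ‖q‖ < 1) (n : ℕ) {x : ℂ} (hx : ‖x‖ < 1) :
    Summable (fun m : ℕ => qb q n m * x^m) := by
  refine Summable.of_norm_bounded (g := fun m => (2^n * ‖qPoch q q n‖⁻¹) * ‖x‖^m)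
    ((summable_geometric_of_lt_one (norm_nonneg x) hx).mul_left _) (fun m => ?_)
  rw [norm_mul, norm_pow]
  exact mul_le_mul_of_nonneg_right (norm_qb_le hq n m) (by positivity)

lemma qPascal (hq : ‖q‖ < 1) (n m : ℕ) :
    qb q (n+1) (m+1) = qb q n (m+1) + q^(n+1) * qb q (n+1) m := by
  unfold qb
  have h1 : qPoch (q^(m+2)) q (n+1) = qPoch (q^(m+2)) q n * (1 - q^(m+2) * q^n) :=
    qPoch_succ _ n
  have h2 : qPoch (q^(m+1)) q (n+1) = (1 - q^(m+1)) * qPoch (q^(m+2)) q n := by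
    rw [qPoch_succ_left, ← pow_succ]
  have h3 : qPoch q q (n+1) = qPoch q q n * (1 - q * q^n) := qPoch_succ _ n
  have hn1 : (1:ℂ) - q * q^n ≠ 0 := by
    have := one_sub_ne hq n
    rwa [pow_succ'] at this
  have hPn := qPoch_q_ne hq n
  rw [h1, h2, h3]
  field_simp
  have hinv : (1 - q * q ^ n) * (1 - q * q ^ n)⁻¹ = 1 := mul_inv_cancel₀ hn1
  linear_combination (qPoch (q^(m+2)) q n) * hinv
lemma qbinom_step (hq : ‖q‖ < 1) (n : ℕ) {x : ℂ} (hx : ‖x‖ < 1) :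
    (∑' m : ℕ, qb q (n+1) m * x^m) * (1 - x * q^(n+1))
      = ∑' m : ℕ, qb q n m * x^m := by
  have hsF := summable_qb hq (n+1) hx
  have hsf := summable_qb hq n hx
  set F := ∑' m : ℕ, qb q (n+1) m * x^m with hF
  have sA : Summable (fun m : ℕ => qb q (n+1) (m+1) * x^(m+1)) :=
    (summable_nat_add_iff 1).2 hsF
  have sB : Summable (fun m : ℕ => (q^(n+1) * qb q (n+1) m) * x^(m+1)) := by
    refine (hsF.mul_left (q^(n+1) * x)).congr fun m => ?_
    rw [pow_succ]
    ring
  have e1 : q^(n+1) * x * F = ∑' m : ℕ, (q^(n+1) * qb q (n+1) m) * x^(m+1) := by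
    rw [hF, ← tsum_mul_left]
    refine tsum_congr fun m => ?_
    rw [pow_succ]
    ring
  have e2 : F = qb q (n+1) 0 * x^0 + ∑' m : ℕ, qb q (n+1) (m+1) * x^(m+1) :=
    Summable.tsum_eq_zero_add hsF
  have e3 : (∑' m : ℕ, qb q n m * x^m)
      = qb q n 0 * x^0 + ∑' m : ℕ, qb q n (m+1) * x^(m+1) :=
    Summable.tsum_eq_zero_add hsf
  have e4 : (∑' m : ℕ, qb q (n+1) (m+1) * x^(m+1))
      - ∑' m : ℕ, (q^(n+1) * qb q (n+1) m) * x^(m+1)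
      = ∑' m : ℕ, qb q n (m+1) * x^(m+1) := by
    rw [← Summable.tsum_sub sA sB]
    refine tsum_congr fun m => ?_
    rw [qPascal hq n m]
    ring
  linear_combination e2 - e1 + e4 - e3 + x^0 * qb_zero hq (n+1) - x^0 * qb_zero hq n

lemma one_sub_mul_ne (hq : ‖q‖ < 1) {x : ℂ} (hx : ‖x‖ < 1) (j : ℕ) :
    (1:ℂ) - x * q^j ≠ 0 := by
  intro h
  have h1 : x * q^j = 1 := by linear_combination -h
  have : ‖x * q^j‖ < 1 := by
    rw [norm_mul, norm_pow]
    calc ‖x‖ * ‖q‖^j ≤ ‖x‖ * 1 :=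
          mul_le_mul_of_nonneg_left (pow_le_one₀ (norm_nonneg q) hq.le) (norm_nonneg x)
      _ < 1 := by simpa using hx
  rw [h1] at this
  simp at this

lemma qbinom (hq : ‖q‖ < 1) (n : ℕ) {x : ℂ} (hx : ‖x‖ < 1) :
    (∑' m : ℕ, qb q n m * x^m) * qPoch x q (n+1) = 1 := by
  induction n with
  | zero =>
    have hb : ∀ m : ℕ, qb q 0 m * x^m = x^m := by
      intro m
      unfold qb qPoch
      simp
    rw [tsum_congr hb, tsum_geometric_of_norm_lt_one hx]
    have : qPoch x q 1 = 1 - x := by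
      unfold qPoch
      simp
    rw [this]
    have hne : (1:ℂ) - x ≠ 0 := by
      have h := one_sub_mul_ne hq hx 0
      simpa using h
    exact inv_mul_cancel₀ hne
  | succ n ih =>
    rw [qPoch_succ]
    have hstep := qbinom_step hq n hx
    calc (∑' m : ℕ, qb q (n+1) m * x^m) * (qPoch x q (n+1) * (1 - x*q^(n+1)))
        = ((∑' m : ℕ, qb q (n+1) m * x^m) * (1 - x*q^(n+1))) * qPoch x q (n+1) := by
          ring
      _ = (∑' m : ℕ, qb q n m * x^m) * qPoch x q (n+1) := by rw [hstep]
      _ = 1 := ih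
lemma norm_q_pow_lt (hq : ‖q‖ < 1) (j : ℕ) : ‖q ^ (j+1)‖ < 1 := by
  rw [norm_pow]
  exact pow_lt_one₀ (norm_nonneg q) hq (Nat.succ_ne_zero j)

lemma qPoch_split (a b : ℕ) :
    qPoch q q (a + b) = qPoch q q a * qPoch (q^(a+1)) q b := by
  unfold qPoch
  rw [Finset.prod_range_add]
  congr 1
  refine Finset.prod_congr rfl fun i _ => ?_
  congr 1
  rw [pow_add, pow_add]
  ring

lemma qb_mul_P (hq : ‖q‖ < 1) (n m : ℕ) :
    qb q n m * qPoch q q m = qPoch (q^(n+1)) q m := by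
  have h1 : qPoch q q (m + n) = qPoch q q m * qPoch (q^(m+1)) q n := qPoch_split m n
  have h2 : qPoch q q (m + n) = qPoch q q n * qPoch (q^(n+1)) q m := by
    rw [Nat.add_comm]
    exact qPoch_split n m
  unfold qb
  have hn := qPoch_q_ne hq n
  field_simp
  linear_combination h1.symm + h2
noncomputable def gg (q : ℂ) (n : ℕ) (p : ℕ × ℕ) : ℂ :=
  (q^(n+p.1) / qPoch q q p.1) * (qb q n p.2 * (q^(n+p.1+1))^p.2)

lemma gg_apply (q : ℂ) (n k m : ℕ) :
    gg q n (k, m) = (q^(n+k) / qPoch q q k) * (qb q n m * (q^(n+k+1))^m) := rfl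

end QAux

open QAux in
theorem stmt1 (q : ℂ) (hq : ‖q‖ < 1) (n : ℕ) :
    qInf q * ∑' k : ℕ, qPoch q q (n + k) * q ^ (n + k)
        / (qPoch q q k * qPoch q q (2 * n + k + 1))
      = q ^ n * ∑' j : ℕ, qPoch (q ^ (n + 1)) q j * q ^ ((n + 1) * j) := by
  classical
  obtain ⟨c, hc, hlb⟩ := norm_qPoch_ge hq
  have hr0 : (0:ℝ) ≤ ‖q‖ := norm_nonneg q
  have hxk : ∀ k : ℕ, ‖q^(n+k+1)‖ < 1 := fun k => norm_q_pow_lt hq (n+k)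
  have hsplit : ∀ k : ℕ,
      qPoch q q (2*n+k+1) = qPoch q q (n+k) * qPoch (q^(n+k+1)) q (n+1) := by
    intro k
    have h : 2*n+k+1 = (n+k) + (n+1) := by omega
    rw [h, qPoch_split]
  have hXne : ∀ k : ℕ, qPoch (q^(n+k+1)) q (n+1) ≠ 0 := by
    intro k h0
    have h := qPoch_q_ne hq (2*n+k+1)
    rw [hsplit k, h0, mul_zero] at h
    exact h rfl
  -- termwise expansion of the k-th term
  have hterm : ∀ k : ℕ,
      qPoch q q (n + k) * q ^ (n + k) / (qPoch q q k * qPoch q q (2 * n + k + 1))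
        = ∑' m : ℕ, gg q n (k, m) := by
    intro k
    have hinv : (∑' m : ℕ, qb q n m * (q^(n+k+1))^m) = (qPoch (q^(n+k+1)) q (n+1))⁻¹ :=
      eq_inv_of_mul_eq_one_left (qbinom hq n (hxk k))
    have hpull : (∑' m : ℕ, gg q n (k, m))
        = (q^(n+k) / qPoch q q k) * ∑' m : ℕ, qb q n m * (q^(n+k+1))^m := by
      rw [← tsum_mul_left]
      exact tsum_congr fun m => (gg_apply q n k m)
    rw [hpull, hinv, hsplit k]
    have h1 := qPoch_q_ne hq (n+k)
    have h2 := qPoch_q_ne hq k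
    have h3 := hXne k
    field_simp
  -- summability of the double family
  have hgsum : Summable (gg q n) := by
    have hCnn : 0 ≤ (c⁻¹ * ‖q‖^n) * (2^n * ‖qPoch q q n‖⁻¹) := by positivity
    have hgeo := summable_geometric_of_lt_one hr0 hq
    have hprod : Summable (fun p : ℕ × ℕ =>
        ((c⁻¹ * ‖q‖^n) * (2^n * ‖qPoch q q n‖⁻¹)) * (‖q‖^p.1 * ‖q‖^p.2)) :=
      (hgeo.mul_of_nonneg hgeo (fun i => pow_nonneg hr0 i)
        (fun i => pow_nonneg hr0 i)).mul_left _
    refine Summable.of_norm_bounded hprod (fun p => ?_)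
    obtain ⟨k, m⟩ := p
    have ha : ‖q^(n+k) / qPoch q q k‖ ≤ (c⁻¹ * ‖q‖^n) * ‖q‖^k := by
      rw [norm_div, norm_pow, div_eq_mul_inv]
      have hi : ‖qPoch q q k‖⁻¹ ≤ c⁻¹ := inv_anti₀ hc (hlb k)
      calc ‖q‖^(n+k) * ‖qPoch q q k‖⁻¹ ≤ ‖q‖^(n+k) * c⁻¹ :=
            mul_le_mul_of_nonneg_left hi (pow_nonneg hr0 _)
        _ = (c⁻¹ * ‖q‖^n) * ‖q‖^k := by rw [pow_add]; ring
    have hb : ‖qb q n m * (q^(n+k+1))^m‖ ≤ (2^n * ‖qPoch q q n‖⁻¹) * ‖q‖^m := by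
      rw [norm_mul, norm_pow, norm_pow]
      have hp : (‖q‖^(n+k+1))^m ≤ ‖q‖^m := by
        rw [← pow_mul]
        apply pow_le_pow_of_le_one hr0 hq.le
        nlinarith [Nat.zero_le ((n+k)*m)]
      exact mul_le_mul (norm_qb_le hq n m) hp (by positivity) (by positivity)
    calc ‖gg q n (k, m)‖
        = ‖q^(n+k) / qPoch q q k‖ * ‖qb q n m * (q^(n+k+1))^m‖ := by
          rw [gg_apply, norm_mul]
      _ ≤ ((c⁻¹ * ‖q‖^n) * ‖q‖^k) * ((2^n * ‖qPoch q q n‖⁻¹) * ‖q‖^m) :=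
          mul_le_mul ha hb (norm_nonneg _) (by positivity)
      _ = ((c⁻¹ * ‖q‖^n) * (2^n * ‖qPoch q q n‖⁻¹)) * (‖q‖^k * ‖q‖^m) := by ring
  -- row and column summability
  have hrow : ∀ k : ℕ, Summable (fun m : ℕ => gg q n (k, m)) := by
    intro k
    have h := (summable_qb hq n (hxk k)).mul_left (q^(n+k) / qPoch q q k)
    exact h.congr fun m => (gg_apply q n k m).symm
  have hcolfun : ∀ m k : ℕ, gg q n (k, m)
      = (qb q n m * q^((n+1)*m) * q^n) * ((q^(m+1))^k / qPoch q q k) := by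
    intro m k
    rw [gg_apply, div_eq_mul_inv, div_eq_mul_inv]
    ring
  have hcol : ∀ m : ℕ, Summable (fun k : ℕ => gg q n (k, m)) := by
    intro m
    have h := (summable_E hq (norm_q_pow_lt hq m)).mul_left
      (qb q n m * q^((n+1)*m) * q^n)
    exact h.congr fun k => (hcolfun m k).symm
  -- Fubini
  have huncurry : Summable (Function.uncurry (fun k m : ℕ => gg q n (k, m))) :=
    hgsum.congr fun p => by rw [Function.uncurry]
  have hfub : (∑' k : ℕ, ∑' m : ℕ, gg q n (k, m)) = ∑' m : ℕ, ∑' k : ℕ, gg q n (k, m) :=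
    (Summable.tsum_comm' huncurry hrow hcol).symm
  -- inner sum over k
  have hinner : ∀ m : ℕ, (∑' k : ℕ, gg q n (k, m))
      = (qb q n m * q^((n+1)*m) * q^n) * E q (q^(m+1)) := by
    intro m
    rw [E, ← tsum_mul_left]
    exact tsum_congr fun k => hcolfun m k
  calc qInf q * ∑' k : ℕ, qPoch q q (n + k) * q ^ (n + k)
        / (qPoch q q k * qPoch q q (2 * n + k + 1))
      = qInf q * ∑' m : ℕ, (qb q n m * q^((n+1)*m) * q^n) * E q (q^(m+1)) := by
        rw [tsum_congr hterm, hfub, tsum_congr hinner]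
    _ = ∑' m : ℕ, qInf q * ((qb q n m * q^((n+1)*m) * q^n) * E q (q^(m+1))) := by
        rw [tsum_mul_left]
    _ = ∑' m : ℕ, q^n * (qPoch (q^(n+1)) q m * q^((n+1)*m)) := by
        refine tsum_congr fun m => ?_
        rw [iterE hq m]
        calc qInf q * ((qb q n m * q^((n+1)*m) * q^n) * (qPoch q q m * E q q))
            = (qb q n m * qPoch q q m) * q^((n+1)*m) * q^n * (qInf q * E q q) := by ring
          _ = q^n * (qPoch (q^(n+1)) q m * q^((n+1)*m)) := by
              rw [qInf_mul_E hq, qb_mul_P hq n m]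
              ring
    _ = q ^ n * ∑' j : ℕ, qPoch (q ^ (n + 1)) q j * q ^ ((n + 1) * j) := by
        rw [tsum_mul_left]
end

section
/- The pair β_n = q^n/(q²;q)_{2n}, with α_{3m-1} = q^{6m²-4m}, α_{3m} = q^{6m²+4m}, α_{3m+1} = -q^{6m²+8m+2} - q^{6m²+4m}, is a Bailey pair relative to a = q; that is, β_n = ∑_{r=0}^n α_r/((q;q)_{n-r}(q²;q)_{n+r}) for all n ≥ 0. -/
set_option maxHeartbeats 4000000


open Finset

noncomputable def alphaS4 (q : ℂ) (n : ℕ) : ℂ :=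
  if n % 3 = 0 then q ^ (6 * ((n : ℤ) / 3) ^ 2 + 4 * ((n : ℤ) / 3) : ℤ)
  else if n % 3 = 1 then -q ^ (6 * ((n : ℤ) / 3) ^ 2 + 8 * ((n : ℤ) / 3) + 2 : ℤ) - q ^ (6 * ((n : ℤ) / 3) ^ 2 + 4 * ((n : ℤ) / 3) : ℤ)
  else q ^ (6 * (((n : ℤ) + 1) / 3) ^ 2 - 4 * (((n : ℤ) + 1) / 3) : ℤ)

lemma one_sub_pow_ne {q : ℂ} (hq : ‖q‖ < 1) {k : ℕ} (hk : k ≠ 0) : 1 - q ^ k ≠ 0 := by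
  have h : ‖q ^ k‖ < 1 := by
    rw [norm_pow]; exact pow_lt_one₀ (norm_nonneg q) hq hk
  intro h0
  have : q ^ k = 1 := by linear_combination -h0
  rw [this] at h; simp at h

lemma f1_ne {q : ℂ} (hq : ‖q‖ < 1) (k : ℕ) : 1 - q * q ^ k ≠ 0 := by
  have := one_sub_pow_ne hq (Nat.succ_ne_zero k)
  rwa [pow_succ, mul_comm (q^k) q] at this

lemma f2_ne {q : ℂ} (hq : ‖q‖ < 1) (k : ℕ) : 1 - q ^ 2 * q ^ k ≠ 0 := by
  have := one_sub_pow_ne hq (show k+2 ≠ 0 from by omega)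
  rwa [show k+2 = 2 + k from by ring, pow_add] at this

lemma qPoch_q_ne {q : ℂ} (hq : ‖q‖ < 1) (n : ℕ) : qPoch q q n ≠ 0 := by
  rw [qPoch]; exact Finset.prod_ne_zero_iff.mpr fun i _ => f1_ne hq i

lemma qPoch_q2_ne {q : ℂ} (hq : ‖q‖ < 1) (n : ℕ) : qPoch (q^2) q n ≠ 0 := by
  rw [qPoch]; exact Finset.prod_ne_zero_iff.mpr fun i _ => f2_ne hq i

lemma qPoch_succ (a q : ℂ) (n : ℕ) : qPoch a q (n+1) = qPoch a q n * (1 - a * q ^ n) :=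
  Finset.prod_range_succ _ _

lemma alpha_0 (q : ℂ) (m : ℕ) : alphaS4 q (3*m) = q ^ (6*m^2+4*m) := by
  rw [alphaS4, if_pos (by omega : (3*m) % 3 = 0)]
  rw [show ((3*m : ℕ) : ℤ)/3 = (m : ℤ) from by push_cast; omega]
  rw [show (6*(m:ℤ)^2+4*(m:ℤ) : ℤ) = ((6*m^2+4*m : ℕ) : ℤ) from by push_cast; ring]
  exact zpow_natCast q _

lemma alpha_1 (q : ℂ) (m : ℕ) : alphaS4 q (3*m+1) = -q ^ (6*m^2+8*m+2) - q ^ (6*m^2+4*m) := by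
  rw [alphaS4, if_neg (by omega : ¬ (3*m+1) % 3 = 0), if_pos (by omega : (3*m+1) % 3 = 1)]
  rw [show ((3*m+1 : ℕ) : ℤ)/3 = (m : ℤ) from by push_cast; omega]
  rw [show (6*(m:ℤ)^2+8*(m:ℤ)+2 : ℤ) = ((6*m^2+8*m+2 : ℕ) : ℤ) from by push_cast; ring]
  rw [show (6*(m:ℤ)^2+4*(m:ℤ) : ℤ) = ((6*m^2+4*m : ℕ) : ℤ) from by push_cast; ring]
  rw [zpow_natCast, zpow_natCast]

lemma alpha_2 (q : ℂ) (m : ℕ) : alphaS4 q (3*m+2) = q ^ (6*m^2+8*m+2) := by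
  rw [alphaS4, if_neg (by omega : ¬ (3*m+2) % 3 = 0), if_neg (by omega : ¬ (3*m+2) % 3 = 1)]
  rw [show (((3*m+2 : ℕ) : ℤ)+1)/3 = ((m : ℤ)+1) from by push_cast; omega]
  rw [show (6*((m:ℤ)+1)^2-4*((m:ℤ)+1) : ℤ) = ((6*m^2+8*m+2 : ℕ) : ℤ) from by push_cast; ring]
  exact zpow_natCast q _


lemma inner (q : ℂ) (hq : ‖q‖ < 1) (m : ℕ) : ∀ j M : ℕ, M = 3*m + j →
    (∑ r ∈ Finset.range (3*m), alphaS4 q r / (qPoch q q (M-r) * qPoch (q^2) q (M+r)))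
    = ( -(q^(6*m^2+4*m+2*j) - q^(6*m^2+8*m+2*j) + q^(6*m^2+8*m+3*j) - q^(6*m^2+10*m+3*j))
        * (1-q^(6*m+j+1)) / (qPoch q q j * qPoch (q^2) q (6*m+j))
       + q * (∑ r ∈ Finset.range (3*m), alphaS4 q r / (qPoch q q (M-1-r) * qPoch (q^2) q (M-1+r))) )
      / ((1-q^(2*M))*(1-q^(2*M+1))) := by
  induction m with
  | zero =>
    intro j M hM
    norm_num
  | succ m ih =>
    intro j M hM
    have ih' := ih (j+3) M (by omega)
    rw [show 3*(m+1) = 3*m+1+1+1 from by ring]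
    simp only [Finset.sum_range_succ]
    simp only [show M - 3*m = j+3 from by omega, show M - (3*m+1) = j+2 from by omega,
      show M - (3*m+1+1) = j+1 from by omega,
      show M - 1 - 3*m = j+2 from by omega, show M - 1 - (3*m+1) = j+1 from by omega,
      show M - 1 - (3*m+1+1) = j from by omega,
      show M + 3*m = 6*m+j+3 from by omega, show M + (3*m+1) = 6*m+j+4 from by omega,
      show M + (3*m+1+1) = 6*m+j+5 from by omega,
      show M - 1 + 3*m = 6*m+j+2 from by omega, show M - 1 + (3*m+1) = 6*m+j+3 from by omega,
      show M - 1 + (3*m+1+1) = 6*m+j+4 from by omega,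
      show 6*m+(j+3) = 6*m+j+3 from by ring,
      show 6*(m+1)+j = 6*m+j+6 from by ring,
      show 2*M = 6*m+2*j+6 from by omega,
      show (3*m+1+1 : ℕ) = 3*m+2 from rfl] at ih' ⊢
    rw [alpha_0, alpha_1, alpha_2]
    -- nonzero facts
    have hPa : qPoch q q j ≠ 0 := qPoch_q_ne hq j
    have hPb : qPoch (q^2) q (6*m+j+2) ≠ 0 := qPoch_q2_ne hq (6*m+j+2)
    have hg0 : (1:ℂ) - q*q^j ≠ 0 := f1_ne hq j
    have hg1 : (1:ℂ) - q*q^(j+1) ≠ 0 := f1_ne hq (j+1)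
    have hg2 : (1:ℂ) - q*q^(j+2) ≠ 0 := f1_ne hq (j+2)
    have hh2 : (1:ℂ) - q^2*q^(6*m+j+2) ≠ 0 := f2_ne hq (6*m+j+2)
    have hh3 : (1:ℂ) - q^2*q^(6*m+j+3) ≠ 0 := f2_ne hq (6*m+j+3)
    have hh4 : (1:ℂ) - q^2*q^(6*m+j+4) ≠ 0 := f2_ne hq (6*m+j+4)
    have hh5 : (1:ℂ) - q^2*q^(6*m+j+5) ≠ 0 := f2_ne hq (6*m+j+5)
    have hA : ((1:ℂ)-q^(6*m+2*j+6))*(1-q^(6*m+2*j+6+1)) ≠ 0 :=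
      mul_ne_zero (one_sub_pow_ne hq (by omega)) (one_sub_pow_ne hq (by omega))
    -- splits
    have sp1 : qPoch q q (j+1) = qPoch q q j * (1 - q*q^j) := qPoch_succ q q j
    have sp2 : qPoch q q (j+2) = qPoch q q (j+1) * (1 - q*q^(j+1)) := qPoch_succ q q (j+1)
    have sp3 : qPoch q q (j+3) = qPoch q q (j+2) * (1 - q*q^(j+2)) := qPoch_succ q q (j+2)
    have sq3 : qPoch (q^2) q (6*m+j+3) = qPoch (q^2) q (6*m+j+2) * (1 - q^2*q^(6*m+j+2)) := qPoch_succ _ q _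
    have sq4 : qPoch (q^2) q (6*m+j+4) = qPoch (q^2) q (6*m+j+3) * (1 - q^2*q^(6*m+j+3)) := qPoch_succ _ q _
    have sq5 : qPoch (q^2) q (6*m+j+5) = qPoch (q^2) q (6*m+j+4) * (1 - q^2*q^(6*m+j+4)) := qPoch_succ _ q _
    have sq6 : qPoch (q^2) q (6*m+j+6) = qPoch (q^2) q (6*m+j+5) * (1 - q^2*q^(6*m+j+5)) := qPoch_succ _ q _
    set D : ℂ := qPoch q q j * qPoch (q^2) q (6*m+j+2) * (1-q*q^j) * (1-q*q^(j+1)) * (1-q*q^(j+2))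
        * (1-q^2*q^(6*m+j+2)) * (1-q^2*q^(6*m+j+3)) * (1-q^2*q^(6*m+j+4)) * (1-q^2*q^(6*m+j+5)) with hDdef
    have hD : D ≠ 0 := by
      rw [hDdef]
      exact mul_ne_zero (mul_ne_zero (mul_ne_zero (mul_ne_zero (mul_ne_zero (mul_ne_zero
        (mul_ne_zero (mul_ne_zero hPa hPb) hg0) hg1) hg2) hh2) hh3) hh4) hh5
    have et0 : q^(6*m^2+4*m) / (qPoch q q (j+3) * qPoch (q^2) q (6*m+j+3))
        = q^(6*m^2+4*m) * ((1-q^2*q^(6*m+j+3)) * (1-q^2*q^(6*m+j+4)) * (1-q^2*q^(6*m+j+5))) / D := by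
      rw [div_eq_div_iff (mul_ne_zero (qPoch_q_ne hq (j+3)) (qPoch_q2_ne hq (6*m+j+3))) hD,
        hDdef, sp3, sp2, sp1, sq3]
      ring
    have et1 : (-q^(6*m^2+8*m+2) - q^(6*m^2+4*m)) / (qPoch q q (j+2) * qPoch (q^2) q (6*m+j+4))
        = (-q^(6*m^2+8*m+2) - q^(6*m^2+4*m)) * ((1-q*q^(j+2)) * (1-q^2*q^(6*m+j+4)) * (1-q^2*q^(6*m+j+5))) / D := by
      rw [div_eq_div_iff (mul_ne_zero (qPoch_q_ne hq (j+2)) (qPoch_q2_ne hq (6*m+j+4))) hD,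
        hDdef, sp2, sp1, sq4, sq3]
      ring
    have et2 : q^(6*m^2+8*m+2) / (qPoch q q (j+1) * qPoch (q^2) q (6*m+j+5))
        = q^(6*m^2+8*m+2) * ((1-q*q^(j+1)) * (1-q*q^(j+2)) * (1-q^2*q^(6*m+j+5))) / D := by
      rw [div_eq_div_iff (mul_ne_zero (qPoch_q_ne hq (j+1)) (qPoch_q2_ne hq (6*m+j+5))) hD,
        hDdef, sp1, sq5, sq4, sq3]
      ring
    have es0 : q^(6*m^2+4*m) / (qPoch q q (j+2) * qPoch (q^2) q (6*m+j+2))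
        = q^(6*m^2+4*m) * ((1-q*q^(j+2)) * (1-q^2*q^(6*m+j+2)) * (1-q^2*q^(6*m+j+3)) * (1-q^2*q^(6*m+j+4)) * (1-q^2*q^(6*m+j+5))) / D := by
      rw [div_eq_div_iff (mul_ne_zero (qPoch_q_ne hq (j+2)) (qPoch_q2_ne hq (6*m+j+2))) hD,
        hDdef, sp2, sp1]
      ring
    have es1 : (-q^(6*m^2+8*m+2) - q^(6*m^2+4*m)) / (qPoch q q (j+1) * qPoch (q^2) q (6*m+j+3))
        = (-q^(6*m^2+8*m+2) - q^(6*m^2+4*m)) * ((1-q*q^(j+1)) * (1-q*q^(j+2)) * (1-q^2*q^(6*m+j+3)) * (1-q^2*q^(6*m+j+4)) * (1-q^2*q^(6*m+j+5))) / D := by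
      rw [div_eq_div_iff (mul_ne_zero (qPoch_q_ne hq (j+1)) (qPoch_q2_ne hq (6*m+j+3))) hD,
        hDdef, sp1, sq3]
      ring
    have es2 : q^(6*m^2+8*m+2) / (qPoch q q j * qPoch (q^2) q (6*m+j+4))
        = q^(6*m^2+8*m+2) * ((1-q*q^j) * (1-q*q^(j+1)) * (1-q*q^(j+2)) * (1-q^2*q^(6*m+j+4)) * (1-q^2*q^(6*m+j+5))) / D := by
      rw [div_eq_div_iff (mul_ne_zero (qPoch_q_ne hq j) (qPoch_q2_ne hq (6*m+j+4))) hD,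
        hDdef, sq4, sq3]
      ring
    have eRi : -(q^(6*m^2+4*m+2*(j+3)) - q^(6*m^2+8*m+2*(j+3)) + q^(6*m^2+8*m+3*(j+3)) - q^(6*m^2+10*m+3*(j+3)))
          * (1-q^(6*m+j+3+1)) / (qPoch q q (j+3) * qPoch (q^2) q (6*m+j+3))
        = -(q^(6*m^2+4*m+2*(j+3)) - q^(6*m^2+8*m+2*(j+3)) + q^(6*m^2+8*m+3*(j+3)) - q^(6*m^2+10*m+3*(j+3)))
          * (1-q^(6*m+j+3+1)) * ((1-q^2*q^(6*m+j+3)) * (1-q^2*q^(6*m+j+4)) * (1-q^2*q^(6*m+j+5))) / D := by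
      rw [div_eq_div_iff (mul_ne_zero (qPoch_q_ne hq (j+3)) (qPoch_q2_ne hq (6*m+j+3))) hD,
        hDdef, sp3, sp2, sp1, sq3]
      ring
    have eRg : -(q^(6*(m+1)^2+4*(m+1)+2*j) - q^(6*(m+1)^2+8*(m+1)+2*j) + q^(6*(m+1)^2+8*(m+1)+3*j) - q^(6*(m+1)^2+10*(m+1)+3*j))
          * (1-q^(6*m+j+6+1)) / (qPoch q q j * qPoch (q^2) q (6*m+j+6))
        = -(q^(6*(m+1)^2+4*(m+1)+2*j) - q^(6*(m+1)^2+8*(m+1)+2*j) + q^(6*(m+1)^2+8*(m+1)+3*j) - q^(6*(m+1)^2+10*(m+1)+3*j))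
          * (1-q^(6*m+j+6+1)) * ((1-q*q^j) * (1-q*q^(j+1)) * (1-q*q^(j+2))) / D := by
      rw [div_eq_div_iff (mul_ne_zero (qPoch_q_ne hq j) (qPoch_q2_ne hq (6*m+j+6))) hD,
        hDdef, sq6, sq5, sq4, sq3]
      ring
    rw [eq_div_iff hA, ih']
    rw [add_mul, add_mul, add_mul, div_mul_cancel₀ _ hA]
    rw [et0, et1, et2, es0, es1, es2, eRi, eRg]
    field_simp [hD]
    ring

lemma qPoch_one (q : ℂ) : qPoch q q 1 = 1 - q := by simp [qPoch]


lemma key (q : ℂ) (hq : ‖q‖ < 1) (N : ℕ) :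
    (1-q^(2*N+2))*(1-q^(2*N+3)) *
      (∑ r ∈ Finset.range (N+1+1), alphaS4 q r / (qPoch q q (N+1-r) * qPoch (q^2) q (N+1+r)))
    = q * (∑ r ∈ Finset.range (N+1), alphaS4 q r / (qPoch q q (N-r) * qPoch (q^2) q (N+r))) := by
  obtain ⟨k, hN⟩ : ∃ k, N = 3*k ∨ N = 3*k+1 ∨ N = 3*k+2 := ⟨N/3, by omega⟩
  have hP0 : qPoch q q 0 ≠ 0 := qPoch_q_ne hq 0
  have hgA : (1:ℂ) - q*q^0 ≠ 0 := f1_ne hq 0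
  have hgB : (1:ℂ) - q*q^1 ≠ 0 := f1_ne hq 1
  have hgC : (1:ℂ) - q*q^2 ≠ 0 := f1_ne hq 2
  have spA : qPoch q q 1 = qPoch q q 0 * (1 - q*q^0) := qPoch_succ q q 0
  have spB : qPoch q q 2 = qPoch q q 1 * (1 - q*q^1) := qPoch_succ q q 1
  have spC : qPoch q q 3 = qPoch q q 2 * (1 - q*q^2) := qPoch_succ q q 2
  rcases hN with h | h | h
  · subst h
    have hin := inner q hq k 1 (3*k+1) (by omega)
    simp only [show ((3:ℕ)*k+1-1) = 3*k from rfl] at hin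
    simp only [Finset.sum_range_succ]
    simp only [show (3*k+1-(3*k+1) : ℕ) = 0 from by omega, show (3*k+1-3*k : ℕ) = 1 from by omega,
      show (3*k+1+(3*k+1) : ℕ) = 6*k+2 from by omega, show (3*k+1+3*k : ℕ) = 6*k+1 from by omega,
      show (3*k-3*k : ℕ) = 0 from by omega, show (3*k+3*k : ℕ) = 6*k from by omega,
      show 2*(3*k+1) = 6*k+2 from by ring, show 2*(3*k)+2 = 6*k+2 from by ring,
      show 2*(3*k)+3 = 6*k+2+1 from by ring] at hin ⊢
    rw [alpha_0 q k, alpha_1 q k]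
    have hA : ((1:ℂ)-q^(6*k+2))*(1-q^(6*k+2+1)) ≠ 0 :=
      mul_ne_zero (one_sub_pow_ne hq (by omega)) (one_sub_pow_ne hq (by omega))
    have hPb : qPoch (q^2) q (6*k) ≠ 0 := qPoch_q2_ne hq (6*k)
    have hf0 : (1:ℂ)-q^2*q^(6*k) ≠ 0 := f2_ne hq (6*k)
    have hf1 : (1:ℂ)-q^2*q^(6*k+1) ≠ 0 := f2_ne hq (6*k+1)
    have sq0 : qPoch (q^2) q (6*k+1) = qPoch (q^2) q (6*k) * (1 - q^2*q^(6*k)) := qPoch_succ _ q _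
    have sq1 : qPoch (q^2) q (6*k+2) = qPoch (q^2) q (6*k+1) * (1 - q^2*q^(6*k+1)) := qPoch_succ _ q _
    set D : ℂ := qPoch q q 0 * qPoch (q^2) q (6*k) * (1-q*q^0) * (1-q^2*q^(6*k)) * (1-q^2*q^(6*k+1)) with hDdef
    have hD : D ≠ 0 := by
      rw [hDdef]
      exact mul_ne_zero (mul_ne_zero (mul_ne_zero (mul_ne_zero hP0 hPb) hgA) hf0) hf1
    have et0 : q^(6*k^2+4*k) / (qPoch q q 1 * qPoch (q^2) q (6*k+1))
        = q^(6*k^2+4*k) * (1-q^2*q^(6*k+1)) / D := by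
      rw [div_eq_div_iff (mul_ne_zero (qPoch_q_ne hq 1) (qPoch_q2_ne hq (6*k+1))) hD, hDdef, spA, sq0]
      ring
    have et1 : (-q^(6*k^2+8*k+2) - q^(6*k^2+4*k)) / (qPoch q q 0 * qPoch (q^2) q (6*k+2))
        = (-q^(6*k^2+8*k+2) - q^(6*k^2+4*k)) * (1-q*q^0) / D := by
      rw [div_eq_div_iff (mul_ne_zero hP0 (qPoch_q2_ne hq (6*k+2))) hD, hDdef, sq1, sq0]
      ring
    have es0 : q^(6*k^2+4*k) / (qPoch q q 0 * qPoch (q^2) q (6*k))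
        = q^(6*k^2+4*k) * ((1-q*q^0) * (1-q^2*q^(6*k)) * (1-q^2*q^(6*k+1))) / D := by
      rw [div_eq_div_iff (mul_ne_zero hP0 hPb) hD, hDdef]
      ring
    have eR : -(q^(6*k^2+4*k+2*1) - q^(6*k^2+8*k+2*1) + q^(6*k^2+8*k+3*1) - q^(6*k^2+10*k+3*1))
          * (1-q^(6*k+1+1)) / (qPoch q q 1 * qPoch (q^2) q (6*k+1))
        = -(q^(6*k^2+4*k+2*1) - q^(6*k^2+8*k+2*1) + q^(6*k^2+8*k+3*1) - q^(6*k^2+10*k+3*1))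
          * (1-q^(6*k+1+1)) * (1-q^2*q^(6*k+1)) / D := by
      rw [div_eq_div_iff (mul_ne_zero (qPoch_q_ne hq 1) (qPoch_q2_ne hq (6*k+1))) hD, hDdef, spA, sq0]
      ring
    rw [mul_comm (((1:ℂ)-q^(6*k+2))*(1-q^(6*k+2+1))), hin]
    rw [add_mul, add_mul, div_mul_cancel₀ _ hA]
    rw [et0, et1, es0, eR]
    field_simp [hD]
    ring
  · subst h
    have hin := inner q hq k 2 (3*k+2) (by omega)
    simp only [show ((3:ℕ)*k+2-1) = 3*k+1 from rfl] at hin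
    simp only [Finset.sum_range_succ]
    simp only [show (3*k+1+1-(3*k+1+1) : ℕ) = 0 from by omega,
      show (3*k+1+1-(3*k+1) : ℕ) = 1 from by omega,
      show (3*k+1+1-3*k : ℕ) = 2 from by omega,
      show (3*k+1+1+(3*k+1+1) : ℕ) = 6*k+4 from by omega,
      show (3*k+1+1+(3*k+1) : ℕ) = 6*k+3 from by omega,
      show (3*k+1+1+3*k : ℕ) = 6*k+2 from by omega,
      show (3*k+2-(3*k+1) : ℕ) = 1 from by omega, show (3*k+2-3*k : ℕ) = 2 from by omega,
      show (3*k+2+(3*k+1) : ℕ) = 6*k+3 from by omega, show (3*k+2+3*k : ℕ) = 6*k+2 from by omega,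
      show (3*k+1-(3*k+1) : ℕ) = 0 from by omega, show (3*k+1-3*k : ℕ) = 1 from by omega,
      show (3*k+1+(3*k+1) : ℕ) = 6*k+2 from by omega, show (3*k+1+3*k : ℕ) = 6*k+1 from by omega,
      show 2*(3*k+2) = 6*k+4 from by ring, show 2*(3*k+1)+2 = 6*k+4 from by ring,
      show 2*(3*k+1)+3 = 6*k+4+1 from by ring,
      show (3*k+1+1 : ℕ) = 3*k+2 from rfl] at hin ⊢
    rw [alpha_0 q k, alpha_1 q k, alpha_2 q k]
    have hA : ((1:ℂ)-q^(6*k+4))*(1-q^(6*k+4+1)) ≠ 0 :=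
      mul_ne_zero (one_sub_pow_ne hq (by omega)) (one_sub_pow_ne hq (by omega))
    have hPb : qPoch (q^2) q (6*k+1) ≠ 0 := qPoch_q2_ne hq (6*k+1)
    have hf1 : (1:ℂ)-q^2*q^(6*k+1) ≠ 0 := f2_ne hq (6*k+1)
    have hf2 : (1:ℂ)-q^2*q^(6*k+2) ≠ 0 := f2_ne hq (6*k+2)
    have hf3 : (1:ℂ)-q^2*q^(6*k+3) ≠ 0 := f2_ne hq (6*k+3)
    have sq1 : qPoch (q^2) q (6*k+2) = qPoch (q^2) q (6*k+1) * (1 - q^2*q^(6*k+1)) := qPoch_succ _ q _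
    have sq2 : qPoch (q^2) q (6*k+3) = qPoch (q^2) q (6*k+2) * (1 - q^2*q^(6*k+2)) := qPoch_succ _ q _
    have sq3 : qPoch (q^2) q (6*k+4) = qPoch (q^2) q (6*k+3) * (1 - q^2*q^(6*k+3)) := qPoch_succ _ q _
    set D : ℂ := qPoch q q 0 * qPoch (q^2) q (6*k+1) * (1-q*q^0) * (1-q*q^1)
        * (1-q^2*q^(6*k+1)) * (1-q^2*q^(6*k+2)) * (1-q^2*q^(6*k+3)) with hDdef
    have hD : D ≠ 0 := by
      rw [hDdef]
      exact mul_ne_zero (mul_ne_zero (mul_ne_zero (mul_ne_zero (mul_ne_zero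
        (mul_ne_zero hP0 hPb) hgA) hgB) hf1) hf2) hf3
    have et0 : q^(6*k^2+4*k) / (qPoch q q 2 * qPoch (q^2) q (6*k+2))
        = q^(6*k^2+4*k) * ((1-q^2*q^(6*k+2)) * (1-q^2*q^(6*k+3))) / D := by
      rw [div_eq_div_iff (mul_ne_zero (qPoch_q_ne hq 2) (qPoch_q2_ne hq (6*k+2))) hD, hDdef, spB, spA, sq1]
      ring
    have et1 : (-q^(6*k^2+8*k+2) - q^(6*k^2+4*k)) / (qPoch q q 1 * qPoch (q^2) q (6*k+3))
        = (-q^(6*k^2+8*k+2) - q^(6*k^2+4*k)) * ((1-q*q^1) * (1-q^2*q^(6*k+3))) / D := by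
      rw [div_eq_div_iff (mul_ne_zero (qPoch_q_ne hq 1) (qPoch_q2_ne hq (6*k+3))) hD, hDdef, spA, sq2, sq1]
      ring
    have et2 : q^(6*k^2+8*k+2) / (qPoch q q 0 * qPoch (q^2) q (6*k+4))
        = q^(6*k^2+8*k+2) * ((1-q*q^0) * (1-q*q^1)) / D := by
      rw [div_eq_div_iff (mul_ne_zero hP0 (qPoch_q2_ne hq (6*k+4))) hD, hDdef, sq3, sq2, sq1]
      ring
    have es0 : q^(6*k^2+4*k) / (qPoch q q 1 * qPoch (q^2) q (6*k+1))
        = q^(6*k^2+4*k) * ((1-q*q^1) * (1-q^2*q^(6*k+1)) * (1-q^2*q^(6*k+2)) * (1-q^2*q^(6*k+3))) / D := by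
      rw [div_eq_div_iff (mul_ne_zero (qPoch_q_ne hq 1) hPb) hD, hDdef, spA]
      ring
    have es1 : (-q^(6*k^2+8*k+2) - q^(6*k^2+4*k)) / (qPoch q q 0 * qPoch (q^2) q (6*k+2))
        = (-q^(6*k^2+8*k+2) - q^(6*k^2+4*k)) * ((1-q*q^0) * (1-q*q^1) * (1-q^2*q^(6*k+2)) * (1-q^2*q^(6*k+3))) / D := by
      rw [div_eq_div_iff (mul_ne_zero hP0 (qPoch_q2_ne hq (6*k+2))) hD, hDdef, sq1]
      ring
    have eR : -(q^(6*k^2+4*k+2*2) - q^(6*k^2+8*k+2*2) + q^(6*k^2+8*k+3*2) - q^(6*k^2+10*k+3*2))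
          * (1-q^(6*k+2+1)) / (qPoch q q 2 * qPoch (q^2) q (6*k+2))
        = -(q^(6*k^2+4*k+2*2) - q^(6*k^2+8*k+2*2) + q^(6*k^2+8*k+3*2) - q^(6*k^2+10*k+3*2))
          * (1-q^(6*k+2+1)) * ((1-q^2*q^(6*k+2)) * (1-q^2*q^(6*k+3))) / D := by
      rw [div_eq_div_iff (mul_ne_zero (qPoch_q_ne hq 2) (qPoch_q2_ne hq (6*k+2))) hD, hDdef, spB, spA, sq1]
      ring
    rw [mul_comm (((1:ℂ)-q^(6*k+4))*(1-q^(6*k+4+1))), hin]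
    rw [add_mul, add_mul, add_mul, div_mul_cancel₀ _ hA]
    rw [et0, et1, et2, es0, es1, eR]
    field_simp [hD]
    ring
  · subst h
    have hin := inner q hq k 3 (3*k+2+1) (by omega)
    simp only [show ((3:ℕ)*k+2+1-1) = 3*k+2 from rfl] at hin
    simp only [Finset.sum_range_succ]
    simp only [show (3*k+2+1-(3*k+2+1) : ℕ) = 0 from by omega,
      show (3*k+2+1-(3*k+2) : ℕ) = 1 from by omega,
      show (3*k+2+1-(3*k+1) : ℕ) = 2 from by omega,
      show (3*k+2+1-3*k : ℕ) = 3 from by omega,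
      show (3*k+2+1+(3*k+2+1) : ℕ) = 6*k+6 from by omega,
      show (3*k+2+1+(3*k+2) : ℕ) = 6*k+5 from by omega,
      show (3*k+2+1+(3*k+1) : ℕ) = 6*k+4 from by omega,
      show (3*k+2+1+3*k : ℕ) = 6*k+3 from by omega,
      show (3*k+2-(3*k+2) : ℕ) = 0 from by omega,
      show (3*k+2-(3*k+1) : ℕ) = 1 from by omega, show (3*k+2-3*k : ℕ) = 2 from by omega,
      show (3*k+2+(3*k+2) : ℕ) = 6*k+4 from by omega,
      show (3*k+2+(3*k+1) : ℕ) = 6*k+3 from by omega, show (3*k+2+3*k : ℕ) = 6*k+2 from by omega,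
      show 2*(3*k+2+1) = 6*k+6 from by ring, show 2*(3*k+2)+2 = 6*k+6 from by ring,
      show 2*(3*k+2)+3 = 6*k+6+1 from by ring] at hin ⊢
    rw [show alphaS4 q (3*k+2+1) = q^(6*(k+1)^2+4*(k+1)) from by
      rw [show (3*k+2+1 : ℕ) = 3*(k+1) from by ring, alpha_0]]
    rw [alpha_0 q k, alpha_1 q k, alpha_2 q k]
    have hA : ((1:ℂ)-q^(6*k+6))*(1-q^(6*k+6+1)) ≠ 0 :=
      mul_ne_zero (one_sub_pow_ne hq (by omega)) (one_sub_pow_ne hq (by omega))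
    have hPb : qPoch (q^2) q (6*k+2) ≠ 0 := qPoch_q2_ne hq (6*k+2)
    have hf2 : (1:ℂ)-q^2*q^(6*k+2) ≠ 0 := f2_ne hq (6*k+2)
    have hf3 : (1:ℂ)-q^2*q^(6*k+3) ≠ 0 := f2_ne hq (6*k+3)
    have hf4 : (1:ℂ)-q^2*q^(6*k+4) ≠ 0 := f2_ne hq (6*k+4)
    have hf5 : (1:ℂ)-q^2*q^(6*k+5) ≠ 0 := f2_ne hq (6*k+5)
    have sq2 : qPoch (q^2) q (6*k+3) = qPoch (q^2) q (6*k+2) * (1 - q^2*q^(6*k+2)) := qPoch_succ _ q _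
    have sq3 : qPoch (q^2) q (6*k+4) = qPoch (q^2) q (6*k+3) * (1 - q^2*q^(6*k+3)) := qPoch_succ _ q _
    have sq4 : qPoch (q^2) q (6*k+5) = qPoch (q^2) q (6*k+4) * (1 - q^2*q^(6*k+4)) := qPoch_succ _ q _
    have sq5 : qPoch (q^2) q (6*k+6) = qPoch (q^2) q (6*k+5) * (1 - q^2*q^(6*k+5)) := qPoch_succ _ q _
    set D : ℂ := qPoch q q 0 * qPoch (q^2) q (6*k+2) * (1-q*q^0) * (1-q*q^1) * (1-q*q^2)
        * (1-q^2*q^(6*k+2)) * (1-q^2*q^(6*k+3)) * (1-q^2*q^(6*k+4)) * (1-q^2*q^(6*k+5)) with hDdef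
    have hD : D ≠ 0 := by
      rw [hDdef]
      exact mul_ne_zero (mul_ne_zero (mul_ne_zero (mul_ne_zero (mul_ne_zero (mul_ne_zero
        (mul_ne_zero (mul_ne_zero hP0 hPb) hgA) hgB) hgC) hf2) hf3) hf4) hf5
    have et0 : q^(6*k^2+4*k) / (qPoch q q 3 * qPoch (q^2) q (6*k+3))
        = q^(6*k^2+4*k) * ((1-q^2*q^(6*k+3)) * (1-q^2*q^(6*k+4)) * (1-q^2*q^(6*k+5))) / D := by
      rw [div_eq_div_iff (mul_ne_zero (qPoch_q_ne hq 3) (qPoch_q2_ne hq (6*k+3))) hD, hDdef, spC, spB, spA, sq2]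
      ring
    have et1 : (-q^(6*k^2+8*k+2) - q^(6*k^2+4*k)) / (qPoch q q 2 * qPoch (q^2) q (6*k+4))
        = (-q^(6*k^2+8*k+2) - q^(6*k^2+4*k)) * ((1-q*q^2) * (1-q^2*q^(6*k+4)) * (1-q^2*q^(6*k+5))) / D := by
      rw [div_eq_div_iff (mul_ne_zero (qPoch_q_ne hq 2) (qPoch_q2_ne hq (6*k+4))) hD, hDdef, spB, spA, sq3, sq2]
      ring
    have et2 : q^(6*k^2+8*k+2) / (qPoch q q 1 * qPoch (q^2) q (6*k+5))
        = q^(6*k^2+8*k+2) * ((1-q*q^1) * (1-q*q^2) * (1-q^2*q^(6*k+5))) / D := by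
      rw [div_eq_div_iff (mul_ne_zero (qPoch_q_ne hq 1) (qPoch_q2_ne hq (6*k+5))) hD, hDdef, spA, sq4, sq3, sq2]
      ring
    have et3 : q^(6*(k+1)^2+4*(k+1)) / (qPoch q q 0 * qPoch (q^2) q (6*k+6))
        = q^(6*(k+1)^2+4*(k+1)) * ((1-q*q^0) * (1-q*q^1) * (1-q*q^2)) / D := by
      rw [div_eq_div_iff (mul_ne_zero hP0 (qPoch_q2_ne hq (6*k+6))) hD, hDdef, sq5, sq4, sq3, sq2]
      ring
    have es0 : q^(6*k^2+4*k) / (qPoch q q 2 * qPoch (q^2) q (6*k+2))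
        = q^(6*k^2+4*k) * ((1-q*q^2) * (1-q^2*q^(6*k+2)) * (1-q^2*q^(6*k+3)) * (1-q^2*q^(6*k+4)) * (1-q^2*q^(6*k+5))) / D := by
      rw [div_eq_div_iff (mul_ne_zero (qPoch_q_ne hq 2) hPb) hD, hDdef, spB, spA]
      ring
    have es1 : (-q^(6*k^2+8*k+2) - q^(6*k^2+4*k)) / (qPoch q q 1 * qPoch (q^2) q (6*k+3))
        = (-q^(6*k^2+8*k+2) - q^(6*k^2+4*k)) * ((1-q*q^1) * (1-q*q^2) * (1-q^2*q^(6*k+3)) * (1-q^2*q^(6*k+4)) * (1-q^2*q^(6*k+5))) / D := by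
      rw [div_eq_div_iff (mul_ne_zero (qPoch_q_ne hq 1) (qPoch_q2_ne hq (6*k+3))) hD, hDdef, spA, sq2]
      ring
    have es2 : q^(6*k^2+8*k+2) / (qPoch q q 0 * qPoch (q^2) q (6*k+4))
        = q^(6*k^2+8*k+2) * ((1-q*q^0) * (1-q*q^1) * (1-q*q^2) * (1-q^2*q^(6*k+4)) * (1-q^2*q^(6*k+5))) / D := by
      rw [div_eq_div_iff (mul_ne_zero hP0 (qPoch_q2_ne hq (6*k+4))) hD, hDdef, sq3, sq2]
      ring
    have eR : -(q^(6*k^2+4*k+2*3) - q^(6*k^2+8*k+2*3) + q^(6*k^2+8*k+3*3) - q^(6*k^2+10*k+3*3))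
          * (1-q^(6*k+3+1)) / (qPoch q q 3 * qPoch (q^2) q (6*k+3))
        = -(q^(6*k^2+4*k+2*3) - q^(6*k^2+8*k+2*3) + q^(6*k^2+8*k+3*3) - q^(6*k^2+10*k+3*3))
          * (1-q^(6*k+3+1)) * ((1-q^2*q^(6*k+3)) * (1-q^2*q^(6*k+4)) * (1-q^2*q^(6*k+5))) / D := by
      rw [div_eq_div_iff (mul_ne_zero (qPoch_q_ne hq 3) (qPoch_q2_ne hq (6*k+3))) hD, hDdef, spC, spB, spA, sq2]
      ring
    rw [mul_comm (((1:ℂ)-q^(6*k+6))*(1-q^(6*k+6+1))), hin]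
    rw [add_mul, add_mul, add_mul, add_mul, div_mul_cancel₀ _ hA]
    rw [et0, et1, et2, et3, es0, es1, es2, eR]
    field_simp [hD]
    ring

theorem stmt4 (q : ℂ) (hq : ‖q‖ < 1) (n : ℕ) :
    q ^ n / qPoch (q ^ 2) q (2 * n)
      = ∑ r ∈ Finset.range (n + 1), alphaS4 q r / (qPoch q q (n - r) * qPoch (q ^ 2) q (n + r)) := by
  induction n with
  | zero => norm_num [qPoch, alphaS4]
  | succ n ihn =>
    have hA : ((1:ℂ)-q^(2*n+2))*(1-q^(2*n+3)) ≠ 0 :=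
      mul_ne_zero (one_sub_pow_ne hq (by omega)) (one_sub_pow_ne hq (by omega))
    apply mul_left_cancel₀ hA
    rw [key q hq n, ← ihn]
    rw [show 2*(n+1) = 2*n+1+1 from by ring, qPoch_succ, qPoch_succ]
    have h0 : qPoch (q^2) q (2*n) ≠ 0 := qPoch_q2_ne hq (2*n)
    have h1 : (1:ℂ) - q^2*q^(2*n) ≠ 0 := f2_ne hq (2*n)
    have h2 : (1:ℂ) - q^2*q^(2*n+1) ≠ 0 := f2_ne hq (2*n+1)
    rw [← mul_div_assoc, ← mul_div_assoc, div_eq_div_iff (mul_ne_zero (mul_ne_zero h0 h1) h2) h0]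
    ring
end
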